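/- Let G be a connected multigraph with p = |V(G)| vertices and q = |E(G)| edges, and for each edge a of G with endpoints u_a, v_a let K_a be a connected multigraph with two distinguished distinct vertices ū_a, v̄_a. Let G̃ be the multigraph obtained from G by replacing each edge a by K_a: the edge set of G̃ is the disjoint union of the edge sets of the K_a, and the vertex set is obtained from V(G) together with the disjoint union of the sets V(K_a)∖{ū_a, v̄_a} by attaching each K_a via the identifications ū_a = u_a and v̄_a = v_a (so that distinct K_a meet only in vertices of G, and K_a meets G only in u_a, v_a). Let K′_a be the multigraph obtained from K_a by identifying ū_a and v̄_a. Fix a nonzero complex number A with σ = A + 1 + A^{−1} ≠ 0, and set α_a = ((σ+1)·H(K_a)(A) + H(K′_a)(A))/σ, β_a = (H(K_a)(A) + H(K′_a)(A))/σ, and, assuming β_a ≠ 0 for every edge a, γ_a = 1 − α_a/β_a. Then H(G̃)(A) = (−1)^{p−q} · (Π_{a∈E(G)} β_a) · Ch(G), where Ch(G) is the chain polynomial of G with edge a labelled by γ_a, evaluated at w = −σ. -/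

import Mathlib

open Relation

section QuotInfra
variable {X : Type} 

/-- If two relations generate the same equivalence, the quotients are equivalent. -/
def quotEquivOfEqvGen {r s : X → X → Prop}
    (h1 : ∀ x y, r x y → EqvGen s x y) (h2 : ∀ x y, s x y → EqvGen r x y) :
    Quot r ≃ Quot s where
  toFun := Quot.lift (fun x => Quot.mk s x) (fun x y hxy => Quot.eqvGen_sound (h1 x y hxy))
  invFun := Quot.lift (fun x => Quot.mk r x) (fun x y hxy => Quot.eqvGen_sound (h2 x y hxy))
  left_inv := by intro q; induction q using Quot.ind; rfl
  right_inv := by intro q; induction q using Quot.ind; rfl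

/-- Composition of quotients: quotient of `Quot r` by (the image of) `s` is the
quotient of the base by `r ∪ s`. -/
def quotQuotEquiv (r s : X → X → Prop) :
    Quot (fun c d : Quot r => ∃ x y, s x y ∧ Quot.mk r x = c ∧ Quot.mk r y = d) ≃
      Quot (fun x y => r x y ∨ s x y) where
  toFun := Quot.lift
    (Quot.lift (fun x => Quot.mk _ x)
      (fun x y hxy => Quot.sound (Or.inl hxy)))
    (by
      rintro c d ⟨x, y, hs, rfl, rfl⟩
      exact Quot.sound (Or.inr hs))
  invFun := Quot.lift
    (fun x => Quot.mk _ (Quot.mk r x))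
    (by
      rintro x y (hr | hs)
      · exact congrArg _ (Quot.sound hr)
      · exact Quot.sound ⟨x, y, hs, rfl, rfl⟩)
  left_inv := by
    intro q
    induction q using Quot.ind with
    | _ c => induction c using Quot.ind with
      | _ x => rfl
  right_inv := by intro q; induction q using Quot.ind; rfl

/-- The equivalence generated by a single ordered pair `(a,b)`. -/
lemma eqvGen_pair_iff {a b x y : X} :
    EqvGen (fun x y => x = a ∧ y = b) x y ↔ x = y ∨ (x = a ∨ x = b) ∧ (y = a ∨ y = b) := by
  constructor
  · intro h
    induction h with
    | rel u v huv => exact Or.inr ⟨Or.inl huv.1, Or.inr huv.2⟩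
    | refl u => exact Or.inl rfl
    | symm u v _ ih => tauto
    | trans u v w _ _ ih1 ih2 => rcases ih1 with rfl | h1 <;> rcases ih2 with rfl | h2 <;> tauto
  · rintro (rfl | ⟨hx, hy⟩)
    · exact EqvGen.refl x
    · have hab : EqvGen (fun x y => x = a ∧ y = b) a b := EqvGen.rel _ _ ⟨rfl, rfl⟩
      have key : ∀ z, z = a ∨ z = b → EqvGen (fun x y => x = a ∧ y = b) a z := by
        rintro z (rfl | rfl); exact EqvGen.refl _; exact hab
      exact EqvGen.trans _ _ _ (EqvGen.symm _ _ (key x hx)) (key y hy)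

open Classical in
lemma card_quot_pair [Finite X] (a b : X) :
    Nat.card (Quot (fun x y : X => x = a ∧ y = b)) + 1 =
      Nat.card X + (if a = b then 1 else 0) := by
  classical
  by_cases hab : a = b
  · subst hab
    simp only [if_pos rfl]
    congr 1
    refine (Nat.card_eq_of_bijective (Quot.mk _) ⟨fun x y h => ?_, Quot.mk_surjective⟩).symm
    rcases eqvGen_pair_iff.mp (Quot.eq.mp h) with h' | ⟨h1, h2⟩
    · exact h'
    · rcases h1 with rfl | rfl <;> rcases h2 with rfl | rfl <;> rfl
  · simp only [if_neg hab, add_zero]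
    let g : X → {x : X // ¬ x = b} := fun x => if h : x = b then ⟨a, hab⟩ else ⟨x, h⟩
    have hg : ∀ x y, (x = a ∧ y = b) → g x = g y := by
      rintro x y ⟨rfl, rfl⟩
      simp [g, hab]
    have e : Quot (fun x y : X => x = a ∧ y = b) ≃ {x : X // ¬ x = b} := by
      refine ⟨Quot.lift g hg, fun z => Quot.mk _ z.1, ?_, ?_⟩
      · intro q
        induction q using Quot.ind with
        | _ x =>
          show Quot.mk _ (g x).1 = Quot.mk _ x
          simp only [g]
          split_ifs with h
          · exact Quot.sound ⟨rfl, h⟩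
          · rfl
      · intro z
        show g z.1 = z
        simp only [g]
        rw [dif_neg z.2]
    rw [Nat.card_congr e]
    haveI : Unique {x : X // x = b} := ⟨⟨⟨b, rfl⟩⟩, by rintro ⟨x, rfl⟩; rfl⟩
    have h2 : Nat.card X = Nat.card {x : X // x = b} + Nat.card {x : X // ¬ x = b} := by
      rw [← Nat.card_sum, Nat.card_congr (Equiv.sumCompl (fun x : X => x = b))]
    have h3 : Nat.card {x : X // x = b} = 1 := Nat.card_unique
    omega

open Classical in
/-- Merging one ordered pair into a quotient. -/
lemma card_quot_merge [Finite X] (r : X → X → Prop) (u v : X) :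
    Nat.card (Quot (fun x y => r x y ∨ (x = u ∧ y = v))) + 1 =
      Nat.card (Quot r) + (if Quot.mk r u = Quot.mk r v then 1 else 0) := by
  have hrel : (fun c d : Quot r => ∃ x y, (x = u ∧ y = v) ∧ Quot.mk r x = c ∧ Quot.mk r y = d)
      = (fun c d : Quot r => c = Quot.mk r u ∧ d = Quot.mk r v) := by
    funext c d
    apply propext
    constructor
    · rintro ⟨x, y, ⟨rfl, rfl⟩, rfl, rfl⟩; exact ⟨rfl, rfl⟩
    · rintro ⟨rfl, rfl⟩; exact ⟨u, v, ⟨rfl, rfl⟩, rfl, rfl⟩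
  have e := (quotQuotEquiv r (fun x y => x = u ∧ y = v)).symm
  rw [Nat.card_congr e, hrel]
  exact card_quot_pair _ _

end QuotInfra



/-- A multigraph: a finite vertex set `V`, a finite edge set `E`, and a map assigning
to each edge an unordered pair of (not necessarily distinct) endpoints in `V`;
loops and multiple edges are allowed. -/
structure Multigraph where
  V : Type
  E : Type
  [finV : Finite V]
  [fintypeE : Fintype E]
  [decE : DecidableEq E]
  ends : E → Sym2 V

attribute [instance] Multigraph.finV Multigraph.fintypeE Multigraph.decE

namespace Multigraph

/-- `μ`: the number of connected components of the spanning subgraph of `G`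
with edge set `S`. -/
noncomputable def mu (G : Multigraph) (S : Finset G.E) : ℕ :=
  Nat.card (Quot (fun x y : G.V => ∃ e ∈ S, G.ends e = s(x, y)))

/-- `β`: the first Betti number `|S| − |V| + μ` of the spanning subgraph of `G`
with edge set `S`. -/
noncomputable def betti (G : Multigraph) (S : Finset G.E) : ℕ :=
  S.card + G.mu S - Nat.card G.V

/-- The Yamada polynomial of `G` evaluated at a nonzero complex number `A`:
`H(G)(A) = Σ_{F ⊆ E(G)} (−1)^{|F| + μ(G−F)} (−A − 2 − A⁻¹)^{β(G−F)}`. -/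
noncomputable def yamada (G : Multigraph) (A : ℂ) : ℂ :=
  ∑ F : Finset G.E, (-1 : ℂ) ^ (F.card + G.mu Fᶜ) * (-A - 2 - A⁻¹) ^ (G.betti Fᶜ)

/-- `G` is connected: the whole graph has exactly one connected component. -/
def Connected (G : Multigraph) : Prop := G.mu Finset.univ = 1

end Multigraph

namespace Multigraph

/-- The chain polynomial of a multigraph `G` with edge labels `ℓ`, evaluated at `w`:
`Ch(G) = Σ_{Y ⊆ E} F_{G−Y}(1−w) · Π_{a∈Y} ℓ(a)`, where
`F_{G−Y}(t) = Σ_{S ⊆ E∖Y} (−1)^{|(E∖Y)∖S|} t^{β(S)}` is the flow polynomial of the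
spanning subgraph `G − Y` evaluated at `t = 1 − w`. -/
noncomputable def chain {R : Type*} [CommRing R] (G : Multigraph) (ℓ : G.E → R) (w : R) : R :=
  ∑ Y : Finset G.E,
    (∑ S ∈ Yᶜ.powerset, (-1 : R) ^ (Yᶜ.card - S.card) * (1 - w) ^ G.betti S) *
      ∏ a ∈ Y, ℓ a

/-- The multigraph obtained from `G` by identifying the vertices `u` and `v`
(keeping all edges). -/
def identify (G : Multigraph) (u v : G.V) : Multigraph where
  V := Quot (fun x y : G.V => x = u ∧ y = v)
  E := G.E
  ends := fun e => (G.ends e).map (Quot.mk _)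

/-- The multigraph `G̃` obtained from `G` by replacing each edge `a` (with endpoints
`u a`, `v a`) by the multigraph `K a` with distinguished vertices `ub a`, `vb a`:
the edge set is the disjoint union of the edge sets of the `K a`, and the vertex set
is obtained from `V(G)` together with the disjoint union of the `V(K a)` by
identifying `ub a` with `u a` and `vb a` with `v a`, so that distinct `K a` meet only
in vertices of `G` and `K a` meets `G` only in `u a`, `v a`. -/
def replaceEdges (G : Multigraph) (K : G.E → Multigraph)
    (u v : G.E → G.V) (ub vb : (a : G.E) → (K a).V) : Multigraph where
  V := Quot (fun x y : G.V ⊕ (Σ a : G.E, (K a).V) =>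
    ∃ a : G.E, (x = Sum.inl (u a) ∧ y = Sum.inr ⟨a, ub a⟩) ∨
               (x = Sum.inl (v a) ∧ y = Sum.inr ⟨a, vb a⟩))
  E := Σ a : G.E, (K a).E
  ends := fun e => ((K e.1).ends e.2).map (fun x => Quot.mk _ (Sum.inr ⟨e.1, x⟩))

end Multigraph


open Classical in
lemma card_pair_or {X : Type} [Finite X] (a b : X) :
    Nat.card {x : X // x = a ∨ x = b} + (if a = b then 1 else 0) = 2 := by
  classical
  by_cases hab : a = b
  · subst hab
    rw [if_pos rfl]
    haveI : Unique {x : X // x = a ∨ x = a} :=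
      ⟨⟨⟨a, Or.inl rfl⟩⟩, by rintro ⟨x, (rfl | rfl)⟩ <;> rfl⟩
    rw [Nat.card_unique]
  · rw [if_neg hab, add_zero]
    rw [Nat.card_congr (Equiv.subtypeEquivRight (q := fun x => x ∈ ({a, b} : Set X))
      (by intro x; simp [Set.mem_insert_iff]))]
    rw [Nat.card_coe_set_eq, Set.ncard_pair hab]

open Classical in
lemma card_compl_pair {X : Type} [Finite X] (a b : X) :
    Nat.card {x : X // ¬ (x = a ∨ x = b)} + 2 =
      Nat.card X + (if a = b then 1 else 0) := by
  classical
  have hs : Nat.card X =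
      Nat.card {x : X // x = a ∨ x = b} + Nat.card {x : X // ¬ (x = a ∨ x = b)} := by
    rw [← Nat.card_sum, Nat.card_congr (Equiv.sumCompl _)]
  have h2 := card_pair_or a b
  split_ifs at * <;> omega

namespace Multigraph
open Relation

/-- The relation whose quotient defines `mu`. -/
def murel (H : Multigraph) (S : Finset H.E) : H.V → H.V → Prop :=
  fun x y => ∃ e ∈ S, H.ends e = s(x, y)

lemma mu_def (H : Multigraph) (S : Finset H.E) : H.mu S = Nat.card (Quot (murel H S)) := rfl

lemma card_identify (G : Multigraph) (u v : G.V) (h : u ≠ v) :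
    Nat.card (G.identify u v).V + 1 = Nat.card G.V := by
  have := card_quot_pair u v
  rw [if_neg h] at this
  rw [add_zero] at this
  exact this

open Classical in
lemma identify_mu (G : Multigraph) (u v : G.V) (S : Finset G.E) :
    (G.identify u v).mu S + 1 =
      G.mu S + (if Quot.mk (murel G S) u = Quot.mk (murel G S) v then 1 else 0) := by
  classical
  have key : (G.identify u v).mu S =
      Nat.card (Quot (fun x y : G.V => murel G S x y ∨ (x = u ∧ y = v))) := by
    show Nat.card (Quot (murel (G.identify u v) S)) = _
    apply Nat.card_congr
    refine Equiv.trans ?_ (Equiv.trans (quotQuotEquiv (fun x y : G.V => x = u ∧ y = v)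
      (murel G S)) ?_)
    · apply quotEquivOfEqvGen
      · rintro c d ⟨e, he, hcd⟩
        obtain ⟨x0, y0, h0⟩ : ∃ x y, G.ends e = s(x, y) :=
          Sym2.ind (fun x y => ⟨x, y, rfl⟩) (G.ends e)
        have : (G.identify u v).ends e = s(Quot.mk _ x0, Quot.mk _ y0) := by
          show (G.ends e).map _ = _
          rw [h0, Sym2.map_pair_eq]
        rw [this] at hcd
        rcases Sym2.eq_iff.mp hcd with ⟨rfl, rfl⟩ | ⟨rfl, rfl⟩
        · exact EqvGen.rel _ _ ⟨x0, y0, ⟨e, he, h0⟩, rfl, rfl⟩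
        · exact EqvGen.rel _ _ ⟨y0, x0, ⟨e, he, h0.trans (Sym2.eq_swap)⟩, rfl, rfl⟩
      · rintro c d ⟨x, y, ⟨e, he, hxy⟩, rfl, rfl⟩
        refine EqvGen.rel _ _ ⟨e, he, ?_⟩
        show (G.ends e).map _ = _
        rw [hxy, Sym2.map_pair_eq]
        rfl
    · apply quotEquivOfEqvGen
      · rintro x y (⟨rfl, rfl⟩ | hr)
        · exact EqvGen.rel _ _ (Or.inr ⟨rfl, rfl⟩)
        · exact EqvGen.rel _ _ (Or.inl hr)
      · rintro x y (hr | ⟨rfl, rfl⟩)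
        · exact EqvGen.rel _ _ (Or.inr hr)
        · exact EqvGen.rel _ _ (Or.inl ⟨rfl, rfl⟩)
  rw [key, mu_def]
  exact card_quot_merge (murel G S) u v

end Multigraph

namespace Multigraph
open Relation

lemma eqvGen_eq_of_not {X : Type*} {r : X → X → Prop} (h : ∀ x y, ¬ r x y) {x y : X}
    (he : EqvGen r x y) : x = y := by
  induction he with
  | rel u v huv => exact absurd huv (h u v)
  | refl u => rfl
  | symm u v _ ih => exact ih.symm
  | trans u v w _ _ ih1 ih2 => exact ih1.trans ih2

lemma card_quot_of_not {X : Type} [Finite X] {r : X → X → Prop} (h : ∀ x y, ¬ r x y) :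
    Nat.card (Quot r) = Nat.card X :=
  (Nat.card_eq_of_bijective (Quot.mk r)
    ⟨fun x y hxy => eqvGen_eq_of_not h (Quot.eq.mp hxy), Quot.mk_surjective⟩).symm

lemma mu_empty (G : Multigraph) : G.mu ∅ = Nat.card G.V := by
  apply card_quot_of_not
  rintro x y ⟨e, he, -⟩
  exact absurd he (Finset.notMem_empty e)

lemma mu_le_insert (G : Multigraph) (S : Finset G.E) (e : G.E) :
    G.mu S ≤ G.mu (insert e S) + 1 := by
  classical
  obtain ⟨x0, y0, h0⟩ : ∃ x y, G.ends e = s(x, y) :=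
    Sym2.ind (fun x y => ⟨x, y, rfl⟩) (G.ends e)
  have e1 : Quot (fun x y : G.V => ∃ e' ∈ insert e S, G.ends e' = s(x, y)) ≃
      Quot (fun x y : G.V => (∃ e' ∈ S, G.ends e' = s(x, y)) ∨ (x = x0 ∧ y = y0)) := by
    apply quotEquivOfEqvGen
    · rintro x y ⟨e', he', hxy⟩
      rcases Finset.mem_insert.mp he' with rfl | he'
      · rw [h0] at hxy
        rcases Sym2.eq_iff.mp hxy with ⟨rfl, rfl⟩ | ⟨rfl, rfl⟩
        · exact EqvGen.rel _ _ (Or.inr ⟨rfl, rfl⟩)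
        · exact EqvGen.symm _ _ (EqvGen.rel _ _ (Or.inr ⟨rfl, rfl⟩))
      · exact EqvGen.rel _ _ (Or.inl ⟨e', he', hxy⟩)
    · rintro x y (⟨e', he', hxy⟩ | ⟨rfl, rfl⟩)
      · exact EqvGen.rel _ _ ⟨e', Finset.mem_insert_of_mem he', hxy⟩
      · exact EqvGen.rel _ _ ⟨e, Finset.mem_insert_self e S, h0⟩
  have := card_quot_merge (fun x y : G.V => ∃ e' ∈ S, G.ends e' = s(x, y)) x0 y0
  unfold mu
  rw [Nat.card_congr e1]
  split_ifs at this <;> omega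

lemma card_le_mu (G : Multigraph) (S : Finset G.E) :
    Nat.card G.V ≤ S.card + G.mu S := by
  classical
  induction S using Finset.induction_on with
  | empty => rw [G.mu_empty]; simp
  | @insert e S he ih =>
    have h2 := G.mu_le_insert S e
    rw [Finset.card_insert_of_notMem he]
    omega

lemma betti_eq (G : Multigraph) (S : Finset G.E) :
    (G.betti S : ℤ) = (S.card : ℤ) + G.mu S - Nat.card G.V := by
  have := G.card_le_mu S
  unfold betti
  omega

end Multigraph


namespace Multigraph
section Replace
open Relation Sum

variable (G : Multigraph) (K : G.E → Multigraph) (u v : G.E → G.V)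
  (ub vb : (a : G.E) → (K a).V)

/-- The identification relation underlying the vertex set of `replaceEdges`. -/
def rid : (G.V ⊕ (Σ a : G.E, (K a).V)) → (G.V ⊕ (Σ a : G.E, (K a).V)) → Prop :=
  fun x y => ∃ a : G.E, (x = Sum.inl (u a) ∧ y = Sum.inr ⟨a, ub a⟩) ∨
               (x = Sum.inl (v a) ∧ y = Sum.inr ⟨a, vb a⟩)

open Classical in
/-- Canonical-form map for the vertex set of `replaceEdges`. -/
noncomputable def vmap : (G.V ⊕ (Σ a : G.E, (K a).V)) →
    (G.V ⊕ (Σ a : G.E, {w : (K a).V // ¬ (w = ub a ∨ w = vb a)}))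
  | Sum.inl x => Sum.inl x
  | Sum.inr ⟨a, w⟩ =>
      if hw : w = ub a ∨ w = vb a then Sum.inl (if w = ub a then u a else v a)
      else Sum.inr ⟨a, ⟨w, hw⟩⟩

/-- Inverse of `vmap`. -/
noncomputable def vinv : (G.V ⊕ (Σ a : G.E, {w : (K a).V // ¬ (w = ub a ∨ w = vb a)})) →
    Quot (rid G K u v ub vb)
  | Sum.inl x => Quot.mk _ (Sum.inl x)
  | Sum.inr ⟨a, w, _⟩ => Quot.mk _ (Sum.inr ⟨a, w⟩)

lemma card_replace_V (h : ∀ a, ub a ≠ vb a) :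
    Nat.card (G.replaceEdges K u v ub vb).V + 2 * Fintype.card G.E =
      Nat.card G.V + ∑ a : G.E, Nat.card (K a).V := by
  classical
  have e : (G.replaceEdges K u v ub vb).V ≃
      G.V ⊕ (Σ a : G.E, {w : (K a).V // ¬ (w = ub a ∨ w = vb a)}) := by
    refine ⟨Quot.lift (vmap G K u v ub vb) ?_, vinv G K u v ub vb, ?_, ?_⟩
    · rintro x y ⟨a, (⟨rfl, rfl⟩ | ⟨rfl, rfl⟩)⟩
      · show _ = vmap G K u v ub vb (Sum.inr ⟨a, ub a⟩)
        rw [show vmap G K u v ub vb (Sum.inr ⟨a, ub a⟩)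
            = if hw : ub a = ub a ∨ ub a = vb a then Sum.inl (if ub a = ub a then u a else v a)
              else Sum.inr ⟨a, ⟨ub a, hw⟩⟩ from rfl,
          dif_pos (Or.inl rfl), if_pos rfl]
        rfl
      · show _ = vmap G K u v ub vb (Sum.inr ⟨a, vb a⟩)
        rw [show vmap G K u v ub vb (Sum.inr ⟨a, vb a⟩)
            = if hw : vb a = ub a ∨ vb a = vb a then Sum.inl (if vb a = ub a then u a else v a)
              else Sum.inr ⟨a, ⟨vb a, hw⟩⟩ from rfl,
          dif_pos (Or.inr rfl), if_neg (h a).symm]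
        rfl
    · intro q
      induction q using Quot.ind with
      | _ x =>
        match x with
        | Sum.inl x => rfl
        | Sum.inr ⟨a, w⟩ =>
          show vinv G K u v ub vb (vmap G K u v ub vb (Sum.inr ⟨a, w⟩)) = Quot.mk _ (Sum.inr ⟨a, w⟩)
          rw [show vmap G K u v ub vb (Sum.inr ⟨a, w⟩)
              = if hw : w = ub a ∨ w = vb a then Sum.inl (if w = ub a then u a else v a)
                else Sum.inr ⟨a, ⟨w, hw⟩⟩ from rfl]
          by_cases hw : w = ub a ∨ w = vb a
          · rw [dif_pos hw]
            by_cases hu : w = ub a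
            · rw [if_pos hu]
              subst hu
              exact Quot.sound ⟨a, Or.inl ⟨rfl, rfl⟩⟩
            · rw [if_neg hu]
              rcases hw with hw | hw
              · exact absurd hw hu
              · subst hw
                exact Quot.sound ⟨a, Or.inr ⟨rfl, rfl⟩⟩
          · rw [dif_neg hw]
            rfl
    · intro z
      match z with
      | Sum.inl x => rfl
      | Sum.inr ⟨a, w, hw⟩ =>
        show vmap G K u v ub vb (Sum.inr ⟨a, w⟩) = Sum.inr ⟨a, ⟨w, hw⟩⟩
        rw [show vmap G K u v ub vb (Sum.inr ⟨a, w⟩)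
            = if hw : w = ub a ∨ w = vb a then Sum.inl (if w = ub a then u a else v a)
              else Sum.inr ⟨a, ⟨w, hw⟩⟩ from rfl, dif_neg hw]
  rw [Nat.card_congr e, Nat.card_sum]
  letI : ∀ a, Fintype ((K a).V) := fun a => Fintype.ofFinite _
  rw [Nat.card_eq_fintype_card (α := (Σ a : G.E, {w : (K a).V // ¬ (w = ub a ∨ w = vb a)})),
    Fintype.card_sigma]
  have hper : ∀ a : G.E,
      Fintype.card {w : (K a).V // ¬ (w = ub a ∨ w = vb a)} + 2 = Nat.card (K a).V := by
    intro a
    have := card_compl_pair (ub a) (vb a)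
    rw [if_neg (h a)] at this
    rw [← Nat.card_eq_fintype_card]
    omega
  have : ∑ a : G.E, (Fintype.card {w : (K a).V // ¬ (w = ub a ∨ w = vb a)} + 2)
      = ∑ a : G.E, Nat.card (K a).V := Finset.sum_congr rfl (fun a _ => hper a)
  rw [Finset.sum_add_distrib, Finset.sum_const, Finset.card_univ, smul_eq_mul] at this
  omega

/-- Edge relation coming from the blocks, on the disjoint-sum vertex set. -/
def redge (R : ∀ a, Finset (K a).E) :
    (G.V ⊕ (Σ a : G.E, (K a).V)) → (G.V ⊕ (Σ a : G.E, (K a).V)) → Prop :=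
  fun x y => ∃ a : G.E, ∃ e ∈ R a, ∃ x' y', (K a).ends e = s(x', y') ∧
    x = Sum.inr ⟨a, x'⟩ ∧ y = Sum.inr ⟨a, y'⟩

/-- Total relation: identifications plus block edges. -/
def rtot (R : ∀ a, Finset (K a).E) :
    (G.V ⊕ (Σ a : G.E, (K a).V)) → (G.V ⊕ (Σ a : G.E, (K a).V)) → Prop :=
  fun x y => rid G K u v ub vb x y ∨ redge G K R x y

open Classical in
/-- The set of edges of `G` whose block connects its two attaching vertices. -/
noncomputable def SR (R : ∀ a, Finset (K a).E) : Finset G.E :=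
  Finset.univ.filter (fun a =>
    Quot.mk (murel (K a) (R a)) (ub a) = Quot.mk (murel (K a) (R a)) (vb a))

/-- The retained edge set of the replaced graph determined by `R`. -/
def FR (R : ∀ a, Finset (K a).E) : Finset ((a : G.E) × (K a).E) :=
  Finset.univ.filter (fun x => x.2 ∈ R x.1)

/-- Map from block components into components of the replaced graph. -/
noncomputable def θ (R : ∀ a, Finset (K a).E) (a : G.E) :
    Quot (murel (K a) (R a)) → Quot (rtot G K u v ub vb R) :=
  Quot.lift (fun w => Quot.mk _ (Sum.inr ⟨a, w⟩)) (by
    rintro w w' ⟨e, he, hee⟩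
    exact Quot.sound (Or.inr ⟨a, e, he, w, w', hee, rfl, rfl⟩))

/-- Target type classifying components of the replaced graph. -/
def TGT (R : ∀ a, Finset (K a).E) : Type :=
  Quot (murel G (SR G K ub vb R)) ⊕
    Σ a : G.E, {c : Quot (murel (K a) (R a)) //
      ¬ (c = Quot.mk (murel (K a) (R a)) (ub a) ∨ c = Quot.mk (murel (K a) (R a)) (vb a))}

open Classical in
/-- Canonical form of a block component. -/
noncomputable def φblock (R : ∀ a, Finset (K a).E) (a : G.E)
    (c : Quot (murel (K a) (R a))) : TGT G K ub vb R :=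
  if hc : c = Quot.mk (murel (K a) (R a)) (ub a) ∨ c = Quot.mk (murel (K a) (R a)) (vb a) then
    Sum.inl (Quot.mk _ (if c = Quot.mk (murel (K a) (R a)) (ub a) then u a else v a))
  else Sum.inr ⟨a, ⟨c, hc⟩⟩

open Classical in
lemma φblock_def (R : ∀ a, Finset (K a).E) (a : G.E) (c : Quot (murel (K a) (R a))) :
    φblock G K u v ub vb R a c =
      if hc : c = Quot.mk (murel (K a) (R a)) (ub a) ∨ c = Quot.mk (murel (K a) (R a)) (vb a) then
        Sum.inl (Quot.mk _ (if c = Quot.mk (murel (K a) (R a)) (ub a) then u a else v a))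
      else Sum.inr ⟨a, ⟨c, hc⟩⟩ := rfl

/-- Canonical-form map for components. -/
noncomputable def φ (R : ∀ a, Finset (K a).E) :
    (G.V ⊕ (Σ a : G.E, (K a).V)) → TGT G K ub vb R
  | Sum.inl x => Sum.inl (Quot.mk _ x)
  | Sum.inr ⟨a, w⟩ => φblock G K u v ub vb R a (Quot.mk _ w)

lemma φ_resp (hends : ∀ a, G.ends a = s(u a, v a)) (R : ∀ a, Finset (K a).E) :
    ∀ x y, rtot G K u v ub vb R x y → φ G K u v ub vb R x = φ G K u v ub vb R y := by
  rintro x y (⟨a, (⟨rfl, rfl⟩ | ⟨rfl, rfl⟩)⟩ | ⟨a, e, he, x', y', hee, rfl, rfl⟩)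
  · show Sum.inl _ = φblock G K u v ub vb R a (Quot.mk _ (ub a))
    rw [φblock_def, dif_pos (Or.inl rfl), if_pos rfl]
  · show Sum.inl _ = φblock G K u v ub vb R a (Quot.mk _ (vb a))
    rw [φblock_def]
    by_cases hcc : Quot.mk (murel (K a) (R a)) (vb a) = Quot.mk (murel (K a) (R a)) (ub a)
    · rw [dif_pos (Or.inl hcc), if_pos hcc]
      have ha : a ∈ SR G K ub vb R := by
        simp only [SR, Finset.mem_filter, Finset.mem_univ, true_and]
        exact hcc.symm
      refine congrArg Sum.inl (Quot.sound ⟨a, ha, ?_⟩)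
      rw [hends a]
      exact Sym2.eq_swap
    · rw [dif_pos (Or.inr rfl), if_neg hcc]
  · show φblock G K u v ub vb R a (Quot.mk _ x') = φblock G K u v ub vb R a (Quot.mk _ y')
    exact congrArg _ (Quot.sound ⟨e, he, hee⟩)

lemma ψinl_resp (hends : ∀ a, G.ends a = s(u a, v a)) (R : ∀ a, Finset (K a).E) :
    ∀ x y, murel G (SR G K ub vb R) x y →
      Quot.mk (rtot G K u v ub vb R) (Sum.inl x) = Quot.mk (rtot G K u v ub vb R) (Sum.inl y) := by
  rintro x y ⟨e0, he0, hxy⟩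
  have conn : Quot.mk (murel (K e0) (R e0)) (ub e0) = Quot.mk (murel (K e0) (R e0)) (vb e0) := by
    simpa only [SR, Finset.mem_filter, Finset.mem_univ, true_and] using he0
  have key : Quot.mk (rtot G K u v ub vb R) (Sum.inl (u e0))
      = Quot.mk (rtot G K u v ub vb R) (Sum.inl (v e0)) := by
    calc Quot.mk (rtot G K u v ub vb R) (Sum.inl (u e0))
        = Quot.mk (rtot G K u v ub vb R) (Sum.inr ⟨e0, ub e0⟩) :=
          Quot.sound (r := rtot G K u v ub vb R) (Or.inl ⟨e0, Or.inl ⟨rfl, rfl⟩⟩)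
      _ = θ G K u v ub vb R e0 (Quot.mk (murel (K e0) (R e0)) (ub e0)) := rfl
      _ = θ G K u v ub vb R e0 (Quot.mk (murel (K e0) (R e0)) (vb e0)) := congrArg _ conn
      _ = Quot.mk (rtot G K u v ub vb R) (Sum.inr ⟨e0, vb e0⟩) := rfl
      _ = Quot.mk (rtot G K u v ub vb R) (Sum.inl (v e0)) :=
          (Quot.sound (r := rtot G K u v ub vb R) (Or.inl ⟨e0, Or.inr ⟨rfl, rfl⟩⟩)).symm
  rw [hends e0] at hxy
  rcases Sym2.eq_iff.mp hxy with ⟨rfl, rfl⟩ | ⟨rfl, rfl⟩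
  · exact key
  · exact key.symm

/-- Inverse of the canonical-form map. -/
noncomputable def ψ (hends : ∀ a, G.ends a = s(u a, v a)) (R : ∀ a, Finset (K a).E) :
    TGT G K ub vb R → Quot (rtot G K u v ub vb R)
  | Sum.inl c => Quot.lift (fun x => Quot.mk _ (Sum.inl x)) (ψinl_resp G K u v ub vb hends R) c
  | Sum.inr ⟨a, c, _⟩ => θ G K u v ub vb R a c

open Classical in
lemma mu_replace (h : ∀ a, ub a ≠ vb a) (hends : ∀ a, G.ends a = s(u a, v a))
    (R : ∀ a, Finset (K a).E) :
    (G.replaceEdges K u v ub vb).mu (FR G K R) + 2 * Fintype.card G.E =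
      G.mu (SR G K ub vb R) +
        ∑ a : G.E, ((K a).mu (R a) + (if a ∈ SR G K ub vb R then 1 else 0)) := by
  classical
  have step1 : (G.replaceEdges K u v ub vb).mu (FR G K R)
      = Nat.card (Quot (rtot G K u v ub vb R)) := by
    show Nat.card (Quot (murel (G.replaceEdges K u v ub vb) (FR G K R))) = _
    refine Nat.card_congr (Equiv.trans ?_ (quotQuotEquiv (rid G K u v ub vb) (redge G K R)))
    apply quotEquivOfEqvGen
    · rintro c d ⟨⟨a, e⟩, hee, hcd⟩
      have he : e ∈ R a := (Finset.mem_filter.mp hee).2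
      obtain ⟨x', y', h'⟩ : ∃ x y, (K a).ends e = s(x, y) :=
        Sym2.ind (fun x y => ⟨x, y, rfl⟩) ((K a).ends e)
      have hE : (G.replaceEdges K u v ub vb).ends ⟨a, e⟩
          = s(Quot.mk _ (Sum.inr ⟨a, x'⟩), Quot.mk _ (Sum.inr ⟨a, y'⟩)) := by
        show ((K a).ends e).map _ = _
        rw [h', Sym2.map_pair_eq]
      rw [hE] at hcd
      rcases Sym2.eq_iff.mp hcd with ⟨rfl, rfl⟩ | ⟨rfl, rfl⟩
      · exact Relation.EqvGen.rel _ _ ⟨_, _, ⟨a, e, he, x', y', h', rfl, rfl⟩, rfl, rfl⟩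
      · exact Relation.EqvGen.rel _ _
          ⟨_, _, ⟨a, e, he, y', x', h'.trans Sym2.eq_swap, rfl, rfl⟩, rfl, rfl⟩
    · rintro c d ⟨x, y, ⟨a, e, he, x', y', h', rfl, rfl⟩, rfl, rfl⟩
      refine Relation.EqvGen.rel _ _ ⟨⟨a, e⟩, ?_, ?_⟩
      · exact Finset.mem_filter.mpr ⟨Finset.mem_univ _, he⟩
      · show ((K a).ends e).map _ = _
        rw [h', Sym2.map_pair_eq]
        rfl
  have e2 : Quot (rtot G K u v ub vb R) ≃ TGT G K ub vb R := by
    refine ⟨Quot.lift (φ G K u v ub vb R) (φ_resp G K u v ub vb hends R),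
      ψ G K u v ub vb hends R, ?_, ?_⟩
    · intro q
      induction q using Quot.ind with
      | _ x =>
        match x with
        | Sum.inl x => rfl
        | Sum.inr ⟨a, w⟩ =>
          show ψ G K u v ub vb hends R (φblock G K u v ub vb R a (Quot.mk _ w))
            = Quot.mk _ (Sum.inr ⟨a, w⟩)
          rw [φblock_def]
          by_cases hc : Quot.mk (murel (K a) (R a)) w = Quot.mk (murel (K a) (R a)) (ub a) ∨
              Quot.mk (murel (K a) (R a)) w = Quot.mk (murel (K a) (R a)) (vb a)
          · rw [dif_pos hc]
            by_cases hcu : Quot.mk (murel (K a) (R a)) w = Quot.mk (murel (K a) (R a)) (ub a)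
            · rw [if_pos hcu]
              show Quot.mk (rtot G K u v ub vb R) (Sum.inl (u a)) = _
              calc Quot.mk (rtot G K u v ub vb R) (Sum.inl (u a))
                  = Quot.mk (rtot G K u v ub vb R) (Sum.inr ⟨a, ub a⟩) :=
                    Quot.sound (r := rtot G K u v ub vb R) (Or.inl ⟨a, Or.inl ⟨rfl, rfl⟩⟩)
                _ = θ G K u v ub vb R a (Quot.mk (murel (K a) (R a)) (ub a)) := rfl
                _ = θ G K u v ub vb R a (Quot.mk (murel (K a) (R a)) w) := congrArg _ hcu.symm
                _ = Quot.mk (rtot G K u v ub vb R) (Sum.inr ⟨a, w⟩) := rfl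
            · rw [if_neg hcu]
              have hcv : Quot.mk (murel (K a) (R a)) w = Quot.mk (murel (K a) (R a)) (vb a) := by
                tauto
              show Quot.mk (rtot G K u v ub vb R) (Sum.inl (v a)) = _
              calc Quot.mk (rtot G K u v ub vb R) (Sum.inl (v a))
                  = Quot.mk (rtot G K u v ub vb R) (Sum.inr ⟨a, vb a⟩) :=
                    Quot.sound (r := rtot G K u v ub vb R) (Or.inl ⟨a, Or.inr ⟨rfl, rfl⟩⟩)
                _ = θ G K u v ub vb R a (Quot.mk (murel (K a) (R a)) (vb a)) := rfl
                _ = θ G K u v ub vb R a (Quot.mk (murel (K a) (R a)) w) := congrArg _ hcv.symm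
                _ = Quot.mk (rtot G K u v ub vb R) (Sum.inr ⟨a, w⟩) := rfl
          · rw [dif_neg hc]
            rfl
    · intro z
      match z with
      | Sum.inl c =>
        induction c using Quot.ind with
        | _ x => rfl
      | Sum.inr ⟨a, c, hc⟩ =>
        obtain ⟨w, rfl⟩ := Quot.exists_rep c
        show φ G K u v ub vb R (Sum.inr ⟨a, w⟩) = _
        show φblock G K u v ub vb R a (Quot.mk _ w) = _
        rw [φblock_def, dif_neg hc]
  rw [step1, Nat.card_congr e2]
  show Nat.card (_ ⊕ _) + _ = _
  rw [Nat.card_sum]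
  letI : ∀ a, Fintype (Quot (murel (K a) (R a))) := fun a => Fintype.ofFinite _
  rw [Nat.card_eq_fintype_card (α := Σ a : G.E, {c : Quot (murel (K a) (R a)) //
      ¬ (c = Quot.mk (murel (K a) (R a)) (ub a) ∨ c = Quot.mk (murel (K a) (R a)) (vb a))}),
    Fintype.card_sigma]
  have hper : ∀ a : G.E,
      Fintype.card {c : Quot (murel (K a) (R a)) //
        ¬ (c = Quot.mk (murel (K a) (R a)) (ub a) ∨ c = Quot.mk (murel (K a) (R a)) (vb a))} + 2
      = (K a).mu (R a) + (if a ∈ SR G K ub vb R then 1 else 0) := by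
    intro a
    have hca := card_compl_pair (Quot.mk (murel (K a) (R a)) (ub a))
      (Quot.mk (murel (K a) (R a)) (vb a))
    rw [← Nat.card_eq_fintype_card, mu_def]
    have hmem : (a ∈ SR G K ub vb R) ↔
        (Quot.mk (murel (K a) (R a)) (ub a) = Quot.mk (murel (K a) (R a)) (vb a)) := by
      simp [SR]
    split_ifs with hs
    · rw [if_pos (hmem.mp hs)] at hca
      omega
    · rw [if_neg (fun hh => hs (hmem.mpr hh))] at hca
      omega
  have hsum : ∑ a : G.E, (Fintype.card {c : Quot (murel (K a) (R a)) //
        ¬ (c = Quot.mk (murel (K a) (R a)) (ub a) ∨ c = Quot.mk (murel (K a) (R a)) (vb a))} + 2)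
      = ∑ a : G.E, ((K a).mu (R a) + (if a ∈ SR G K ub vb R then 1 else 0)) :=
    Finset.sum_congr rfl (fun a _ => hper a)
  rw [Finset.sum_add_distrib, Finset.sum_const, Finset.card_univ, smul_eq_mul] at hsum
  rw [mu_def]
  omega

end Replace
section Block
open Classical

variable (Kb : Multigraph) (x y : Kb.V) (A t : ℂ)

open Classical in
/-- Sum over states whose retained edges connect `x` and `y`. -/
noncomputable def WsumT : ℂ :=
  ∑ F ∈ Finset.univ.filter (fun F : Finset Kb.E =>
      Quot.mk (murel Kb Fᶜ) x = Quot.mk (murel Kb Fᶜ) y),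
    (-1 : ℂ) ^ (F.card + Kb.mu Fᶜ) * t ^ (Kb.betti Fᶜ)

open Classical in
/-- Sum over states whose retained edges do not connect `x` and `y`. -/
noncomputable def WsumF : ℂ :=
  ∑ F ∈ Finset.univ.filter (fun F : Finset Kb.E =>
      ¬ (Quot.mk (murel Kb Fᶜ) x = Quot.mk (murel Kb Fᶜ) y)),
    (-1 : ℂ) ^ (F.card + Kb.mu Fᶜ) * t ^ (Kb.betti Fᶜ)

lemma yamada_eq_Wsum : Kb.yamada A = WsumT Kb x y (-A - 2 - A⁻¹)
    + WsumF Kb x y (-A - 2 - A⁻¹) := by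
  classical
  unfold yamada WsumT WsumF
  rw [← Finset.sum_filter_add_sum_filter_not Finset.univ
    (fun F : Finset Kb.E => Quot.mk (murel Kb Fᶜ) x = Quot.mk (murel Kb Fᶜ) y)]

lemma yamada_identify_eq_Wsum (hxy : x ≠ y) :
    (Kb.identify x y).yamada A =
      (-A - 2 - A⁻¹) * WsumT Kb x y (-A - 2 - A⁻¹)
        - WsumF Kb x y (-A - 2 - A⁻¹) := by
  classical
  set t := -A - 2 - A⁻¹ with ht
  have h0 : (Kb.identify x y).yamada A
      = ∑ F : Finset Kb.E, (-1 : ℂ) ^ (F.card + (Kb.identify x y).mu Fᶜ)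
          * t ^ ((Kb.identify x y).betti Fᶜ) := rfl
  rw [h0, ← Finset.sum_filter_add_sum_filter_not Finset.univ
    (fun F : Finset Kb.E => Quot.mk (murel Kb Fᶜ) x = Quot.mk (murel Kb Fᶜ) y)]
  have key : ∀ F : Finset Kb.E,
      (-1 : ℂ) ^ (F.card + (Kb.identify x y).mu Fᶜ) * t ^ ((Kb.identify x y).betti Fᶜ)
      = (if Quot.mk (murel Kb Fᶜ) x = Quot.mk (murel Kb Fᶜ) y then
          t * ((-1 : ℂ) ^ (F.card + Kb.mu Fᶜ) * t ^ (Kb.betti Fᶜ))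
        else -((-1 : ℂ) ^ (F.card + Kb.mu Fᶜ) * t ^ (Kb.betti Fᶜ))) := by
    intro F
    have h1 : (Kb.identify x y).mu Fᶜ + 1 = Kb.mu Fᶜ +
        (if Quot.mk (murel Kb Fᶜ) x = Quot.mk (murel Kb Fᶜ) y then 1 else 0) :=
      Kb.identify_mu x y Fᶜ
    have h4 : (Fᶜ : Finset (Kb.identify x y).E).card = (Fᶜ : Finset Kb.E).card := rfl
    have h2 := Kb.card_identify x y hxy
    have h3 := Kb.card_le_mu Fᶜ
    split_ifs with hc
    · rw [if_pos hc] at h1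
      have hmu : (Kb.identify x y).mu Fᶜ = Kb.mu Fᶜ := by omega
      have hbetti : (Kb.identify x y).betti Fᶜ = Kb.betti Fᶜ + 1 := by
        unfold betti
        rw [hmu]
        omega
      rw [hmu, hbetti]
      ring
    · rw [if_neg hc] at h1
      have hmu : Kb.mu Fᶜ = (Kb.identify x y).mu Fᶜ + 1 := by omega
      have hbetti : (Kb.identify x y).betti Fᶜ = Kb.betti Fᶜ := by
        unfold betti
        omega
      rw [hbetti, hmu,
        show F.card + ((Kb.identify x y).mu Fᶜ + 1) = (F.card + (Kb.identify x y).mu Fᶜ) + 1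
          from rfl,
        pow_succ]
      ring
  have hA : (∑ F ∈ Finset.univ.filter (fun F : Finset Kb.E =>
        Quot.mk (murel Kb Fᶜ) x = Quot.mk (murel Kb Fᶜ) y),
      (-1 : ℂ) ^ (F.card + (Kb.identify x y).mu Fᶜ) * t ^ ((Kb.identify x y).betti Fᶜ))
      = t * WsumT Kb x y t := by
    unfold WsumT
    rw [Finset.mul_sum]
    refine Finset.sum_congr ?_ ?_
    · ext F
      simp
    intro F hF
    rw [key F, if_pos (by simpa using hF : Quot.mk (murel Kb Fᶜ) x = Quot.mk (murel Kb Fᶜ) y)]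
  have hB : (∑ F ∈ Finset.univ.filter (fun F : Finset Kb.E =>
        ¬ (Quot.mk (murel Kb Fᶜ) x = Quot.mk (murel Kb Fᶜ) y)),
      (-1 : ℂ) ^ (F.card + (Kb.identify x y).mu Fᶜ) * t ^ ((Kb.identify x y).betti Fᶜ))
      = - WsumF Kb x y t := by
    unfold WsumF
    rw [← Finset.sum_neg_distrib]
    refine Finset.sum_congr ?_ ?_
    · ext F
      simp
    intro F hF
    rw [key F,
      if_neg (by simpa using hF : ¬ (Quot.mk (murel Kb Fᶜ) x = Quot.mk (murel Kb Fᶜ) y))]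
  rw [hA, hB]
  ring

end Block

open Classical in
lemma chain_eq_sum (G : Multigraph) (γ : G.E → ℂ) (w : ℂ) :
    G.chain γ w = ∑ S : Finset G.E, (1 - w) ^ (G.betti S) * ∏ a ∈ Sᶜ, (γ a - 1) := by
  classical
  unfold chain
  have h1 : ∀ Y : Finset G.E,
      (∑ S ∈ Yᶜ.powerset, (-1 : ℂ) ^ (Yᶜ.card - S.card) * (1 - w) ^ (G.betti S))
          * ∏ a ∈ Y, γ a
      = ∑ S : Finset G.E, (if S ∈ Yᶜ.powerset then
          (-1 : ℂ) ^ (Yᶜ.card - S.card) * (1 - w) ^ (G.betti S) * ∏ a ∈ Y, γ a else 0) := by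
    intro Y
    rw [Finset.sum_ite_mem, Finset.univ_inter, Finset.sum_mul]
  rw [Finset.sum_congr rfl (fun Y _ => h1 Y), Finset.sum_comm]
  apply Finset.sum_congr rfl
  intro S _
  have h2 : ∀ Y : Finset G.E, (if S ∈ Yᶜ.powerset then
        (-1 : ℂ) ^ (Yᶜ.card - S.card) * (1 - w) ^ (G.betti S) * ∏ a ∈ Y, γ a else 0)
      = (if Y ∈ Sᶜ.powerset then
          (1 - w) ^ (G.betti S) * ((∏ a ∈ Y, γ a) * (-1 : ℂ) ^ ((Sᶜ \ Y).card)) else 0) := by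
    intro Y
    by_cases hY : Y ⊆ Sᶜ
    · have hS : S ∈ Yᶜ.powerset := Finset.mem_powerset.mpr (Finset.subset_compl_comm.mp hY)
      rw [if_pos hS, if_pos (Finset.mem_powerset.mpr hY)]
      have hc : Yᶜ.card - S.card = (Sᶜ \ Y).card := by
        have e1 : (Sᶜ \ Y).card = Sᶜ.card - Y.card := Finset.card_sdiff_of_subset hY
        have e2 : Yᶜ.card = Fintype.card G.E - Y.card := Finset.card_compl Y
        have e3 : Sᶜ.card = Fintype.card G.E - S.card := Finset.card_compl S
        have l1 : Y.card ≤ Sᶜ.card := Finset.card_le_card hY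
        have l2 : S.card ≤ Fintype.card G.E := Finset.card_le_univ S
        have l3 : Y.card ≤ Fintype.card G.E := Finset.card_le_univ Y
        omega
      rw [hc]
      ring
    · rw [if_neg (fun hS => hY (Finset.subset_compl_comm.mpr (Finset.mem_powerset.mp hS))),
        if_neg (fun hY2 => hY (Finset.mem_powerset.mp hY2))]
  rw [Finset.sum_congr rfl (fun Y _ => h2 Y), Finset.sum_ite_mem, Finset.univ_inter,
    ← Finset.mul_sum]
  congr 1
  have hpa := Finset.prod_add γ (fun _ => (-1 : ℂ)) Sᶜ
  simp only [Finset.prod_const] at hpa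
  rw [show (∏ a ∈ Sᶜ, (γ a - 1)) = ∏ a ∈ Sᶜ, (γ a + (-1)) from
    Finset.prod_congr rfl (fun a _ => by ring), hpa]

/-- Reindexing subsets of a sigma type by tuples of subsets. -/
def edgesEquiv (G : Multigraph) (K : G.E → Multigraph) :
    Finset ((a : G.E) × (K a).E) ≃ ((a : G.E) → Finset (K a).E) where
  toFun F a := Finset.univ.filter (fun e => (⟨a, e⟩ : (a : G.E) × (K a).E) ∈ F)
  invFun g := Finset.univ.filter (fun x => x.2 ∈ g x.1)
  left_inv F := by
    ext ⟨a, e⟩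
    simp
  right_inv g := by
    funext a
    ext e
    simp

lemma negOnePow_congr {n m : ℕ} (h : n % 2 = m % 2) : (-1 : ℂ) ^ n = (-1 : ℂ) ^ m := by
  conv_lhs => rw [← Nat.div_add_mod n 2]
  conv_rhs => rw [← Nat.div_add_mod m 2]
  rw [pow_add, pow_add, pow_mul, pow_mul, h]
  norm_num

end Multigraph

/-- Let `G` be a connected multigraph with `p` vertices and `q` edges,
and for each edge `a` (with endpoints `u a`, `v a`) let `K a` be a connected
multigraph with distinguished distinct vertices `ub a ≠ vb a`; let `G̃` be obtained
from `G` by replacing each edge `a` by `K a`, and let `K′_a` be `K a` with `ub a`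
and `vb a` identified.  Fix a nonzero `A` with `σ = A + 1 + A⁻¹ ≠ 0` and set
`α_a = ((σ+1)H(K_a) + H(K′_a))/σ`, `β_a = (H(K_a) + H(K′_a))/σ` (assumed nonzero),
`γ_a = 1 − α_a/β_a`.  Then `H(G̃)(A) = (−1)^{p−q} · (Π_a β_a) · Ch(G)`, where `Ch(G)`
is the chain polynomial of `G` with edge `a` labelled `γ_a`, evaluated at `w = −σ`. -/
theorem yamada_replaceEdges_eq_chain (G : Multigraph) (hG : G.Connected)
    (K : G.E → Multigraph) (hK : ∀ a, (K a).Connected)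
    (u v : G.E → G.V) (hends : ∀ a, G.ends a = s(u a, v a))
    (ub vb : (a : G.E) → (K a).V) (hubvb : ∀ a, ub a ≠ vb a)
    (A : ℂ) (hA : A ≠ 0) (σ : ℂ) (hσ : σ = A + 1 + A⁻¹) (hσ0 : σ ≠ 0)
    (α β γ : G.E → ℂ)
    (hα : ∀ a, α a = ((σ + 1) * (K a).yamada A + ((K a).identify (ub a) (vb a)).yamada A) / σ)
    (hβ : ∀ a, β a = ((K a).yamada A + ((K a).identify (ub a) (vb a)).yamada A) / σ)
    (hβ0 : ∀ a, β a ≠ 0)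
    (hγ : ∀ a, γ a = 1 - α a / β a) :
    (G.replaceEdges K u v ub vb).yamada A =
      (-1 : ℂ) ^ ((Nat.card G.V : ℤ) - (Fintype.card G.E : ℤ)) *
        (∏ a : G.E, β a) * G.chain γ (-σ) := by
  classical
  set t : ℂ := -A - 2 - A⁻¹ with htdef
  have ht1 : (1 : ℂ) + t = -σ := by rw [hσ, htdef]; ring
  have hWT : ∀ a, Multigraph.WsumT (K a) (ub a) (vb a) t = - β a := by
    intro a
    have h1 := Multigraph.yamada_eq_Wsum (K a) (ub a) (vb a) A
    have h2 := Multigraph.yamada_identify_eq_Wsum (K a) (ub a) (vb a) A (hubvb a)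
    rw [← htdef] at h1 h2
    have hsum : (K a).yamada A + ((K a).identify (ub a) (vb a)).yamada A
        = -σ * Multigraph.WsumT (K a) (ub a) (vb a) t := by
      rw [h1, h2, ← ht1]; ring
    rw [hβ a, hsum]
    field_simp
  have hWF : ∀ a, Multigraph.WsumF (K a) (ub a) (vb a) t = α a := by
    intro a
    have h1 := Multigraph.yamada_eq_Wsum (K a) (ub a) (vb a) A
    rw [← htdef] at h1
    have hf : Multigraph.WsumF (K a) (ub a) (vb a) t
        = (K a).yamada A - Multigraph.WsumT (K a) (ub a) (vb a) t := by rw [h1]; ring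
    rw [hf, hWT a, hα a, hβ a]
    field_simp
    ring
  have hyam0 : (G.replaceEdges K u v ub vb).yamada A
      = ∑ F : Finset ((a : G.E) × (K a).E),
          (-1 : ℂ) ^ (F.card + (G.replaceEdges K u v ub vb).mu Fᶜ)
            * t ^ ((G.replaceEdges K u v ub vb).betti Fᶜ) := rfl
  have key : ∀ g : (a : G.E) → Finset (K a).E,
      (-1 : ℂ) ^ (((Multigraph.edgesEquiv G K).symm g).card
          + (G.replaceEdges K u v ub vb).mu ((Multigraph.edgesEquiv G K).symm g)ᶜ)
        * t ^ ((G.replaceEdges K u v ub vb).betti ((Multigraph.edgesEquiv G K).symm g)ᶜ)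
      = (-1 : ℂ) ^ (G.mu (Multigraph.SR G K ub vb (fun a => (g a)ᶜ)))
          * t ^ (G.betti (Multigraph.SR G K ub vb (fun a => (g a)ᶜ)))
          * ∏ a : G.E, ((-1 : ℂ) ^ ((g a).card + (K a).mu ((g a)ᶜ)
              + (if a ∈ Multigraph.SR G K ub vb (fun a => (g a)ᶜ) then 1 else 0))
            * t ^ ((K a).betti ((g a)ᶜ))) := by
    intro g
    have hFc : ((Multigraph.edgesEquiv G K).symm g)ᶜ = Multigraph.FR G K (fun a => (g a)ᶜ) := by
      ext ⟨a, e⟩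
      simp [Multigraph.edgesEquiv, Multigraph.FR]
    have hcardc : (((Multigraph.edgesEquiv G K).symm g)ᶜ).card = ∑ a : G.E, ((g a)ᶜ).card := by
      rw [hFc, show Multigraph.FR G K (fun a => (g a)ᶜ)
          = Finset.univ.sigma (fun a => (g a)ᶜ) from by
        ext ⟨a, e⟩
        simp [Multigraph.FR, Finset.mem_sigma], Finset.card_sigma]
    have hcard : ((Multigraph.edgesEquiv G K).symm g).card = ∑ a : G.E, (g a).card := by
      rw [show (Multigraph.edgesEquiv G K).symm g = Finset.univ.sigma g from by
        ext ⟨a, e⟩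
        simp [Multigraph.edgesEquiv, Finset.mem_sigma], Finset.card_sigma]
    have hmu := Multigraph.mu_replace G K u v ub vb hubvb hends (fun a => (g a)ᶜ)
    rw [← hFc] at hmu
    rw [Finset.sum_add_distrib] at hmu
    have hV := Multigraph.card_replace_V G K u v ub vb hubvb
    have hite : (∑ a : G.E, if a ∈ Multigraph.SR G K ub vb (fun a => (g a)ᶜ) then 1 else 0)
        = (Multigraph.SR G K ub vb (fun a => (g a)ᶜ)).card := by
      simp only [Finset.sum_ite_mem, Finset.univ_inter, Finset.sum_const, smul_eq_mul, mul_one]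
    have hA4 : (∑ a : G.E, (K a).betti ((g a)ᶜ)) + (∑ a : G.E, Nat.card (K a).V)
        = (∑ a : G.E, ((g a)ᶜ).card) + ∑ a : G.E, (K a).mu ((g a)ᶜ) := by
      rw [← Finset.sum_add_distrib, ← Finset.sum_add_distrib]
      refine Finset.sum_congr rfl (fun a _ => ?_)
      have := (K a).card_le_mu ((g a)ᶜ)
      unfold Multigraph.betti
      omega
    have hA5 : G.betti (Multigraph.SR G K ub vb (fun a => (g a)ᶜ)) + Nat.card G.V
        = (Multigraph.SR G K ub vb (fun a => (g a)ᶜ)).card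
          + G.mu (Multigraph.SR G K ub vb (fun a => (g a)ᶜ)) := by
      have := G.card_le_mu (Multigraph.SR G K ub vb (fun a => (g a)ᶜ))
      unfold Multigraph.betti
      omega
    have hdef : (G.replaceEdges K u v ub vb).betti ((Multigraph.edgesEquiv G K).symm g)ᶜ
        = (((Multigraph.edgesEquiv G K).symm g)ᶜ).card
          + (G.replaceEdges K u v ub vb).mu ((Multigraph.edgesEquiv G K).symm g)ᶜ
          - Nat.card (G.replaceEdges K u v ub vb).V := rfl
    have hmueq : (G.replaceEdges K u v ub vb).mu ((Multigraph.edgesEquiv G K).symm g)ᶜ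
        = (G.replaceEdges K u v ub vb).mu
          (((Multigraph.edgesEquiv G K).symm g)ᶜ : Finset ((a : G.E) × (K a).E)) := rfl
    have hbetti : (G.replaceEdges K u v ub vb).betti ((Multigraph.edgesEquiv G K).symm g)ᶜ
        = G.betti (Multigraph.SR G K ub vb (fun a => (g a)ᶜ))
          + ∑ a : G.E, (K a).betti ((g a)ᶜ) := by
      omega
    have hsign : (-1 : ℂ) ^ (((Multigraph.edgesEquiv G K).symm g).card
          + (G.replaceEdges K u v ub vb).mu ((Multigraph.edgesEquiv G K).symm g)ᶜ)
        = (-1 : ℂ) ^ (G.mu (Multigraph.SR G K ub vb (fun a => (g a)ᶜ))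
          + ∑ a : G.E, ((g a).card + (K a).mu ((g a)ᶜ)
            + (if a ∈ Multigraph.SR G K ub vb (fun a => (g a)ᶜ) then 1 else 0))) := by
      apply Multigraph.negOnePow_congr
      rw [Finset.sum_add_distrib, Finset.sum_add_distrib]
      omega
    rw [hsign, hbetti, pow_add, pow_add, Finset.prod_mul_distrib,
      Finset.prod_pow_eq_pow_sum, Finset.prod_pow_eq_pow_sum]
    ring
  have hfib : ∀ S : Finset G.E,
      (∑ g ∈ Finset.univ.filter (fun g : (a : G.E) → Finset (K a).E =>
          Multigraph.SR G K ub vb (fun a => (g a)ᶜ) = S),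
        (-1 : ℂ) ^ (G.mu (Multigraph.SR G K ub vb (fun a => (g a)ᶜ)))
          * t ^ (G.betti (Multigraph.SR G K ub vb (fun a => (g a)ᶜ)))
          * ∏ a : G.E, ((-1 : ℂ) ^ ((g a).card + (K a).mu ((g a)ᶜ)
              + (if a ∈ Multigraph.SR G K ub vb (fun a => (g a)ᶜ) then 1 else 0))
            * t ^ ((K a).betti ((g a)ᶜ))))
      = (-1 : ℂ) ^ (G.mu S) * t ^ (G.betti S)
          * ∏ a : G.E, (if a ∈ S then β a else α a) := by
    intro S
    have hcong : ∀ g ∈ Finset.univ.filter (fun g : (a : G.E) → Finset (K a).E =>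
        Multigraph.SR G K ub vb (fun a => (g a)ᶜ) = S),
        (-1 : ℂ) ^ (G.mu (Multigraph.SR G K ub vb (fun a => (g a)ᶜ)))
          * t ^ (G.betti (Multigraph.SR G K ub vb (fun a => (g a)ᶜ)))
          * ∏ a : G.E, ((-1 : ℂ) ^ ((g a).card + (K a).mu ((g a)ᶜ)
              + (if a ∈ Multigraph.SR G K ub vb (fun a => (g a)ᶜ) then 1 else 0))
            * t ^ ((K a).betti ((g a)ᶜ)))
        = (-1 : ℂ) ^ (G.mu S) * t ^ (G.betti S)
          * ∏ a : G.E, ((-1 : ℂ) ^ ((g a).card + (K a).mu ((g a)ᶜ)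
              + (if a ∈ S then 1 else 0))
            * t ^ ((K a).betti ((g a)ᶜ))) := by
      intro g hg
      rw [(Finset.mem_filter.mp hg).2]
    rw [Finset.sum_congr rfl hcong]
    have hfilter : Finset.univ.filter (fun g : (a : G.E) → Finset (K a).E =>
        Multigraph.SR G K ub vb (fun a => (g a)ᶜ) = S)
      = Fintype.piFinset (fun a => Finset.univ.filter (fun fa : Finset (K a).E =>
          ((Quot.mk (Multigraph.murel (K a) faᶜ) (ub a)
            = Quot.mk (Multigraph.murel (K a) faᶜ) (vb a)) ↔ a ∈ S))) := by
      ext g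
      simp only [Finset.mem_filter, Finset.mem_univ, true_and, Fintype.mem_piFinset]
      rw [Finset.ext_iff]
      apply forall_congr'
      intro a
      simp [Multigraph.SR]
    rw [hfilter, ← Finset.mul_sum,
      ← Finset.prod_univ_sum (fun a => Finset.univ.filter (fun fa : Finset (K a).E =>
          ((Quot.mk (Multigraph.murel (K a) faᶜ) (ub a)
            = Quot.mk (Multigraph.murel (K a) faᶜ) (vb a)) ↔ a ∈ S)))
        (fun a fa => (-1 : ℂ) ^ (fa.card + (K a).mu faᶜ + (if a ∈ S then 1 else 0))
          * t ^ ((K a).betti faᶜ))]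
    refine congrArg _ (Finset.prod_congr rfl (fun a _ => ?_))
    by_cases ha : a ∈ S
    · have h1 : (∑ fa ∈ Finset.univ.filter (fun fa : Finset (K a).E =>
            ((Quot.mk (Multigraph.murel (K a) faᶜ) (ub a)
              = Quot.mk (Multigraph.murel (K a) faᶜ) (vb a)) ↔ a ∈ S)),
          (-1 : ℂ) ^ (fa.card + (K a).mu faᶜ + (if a ∈ S then 1 else 0))
            * t ^ ((K a).betti faᶜ))
          = ∑ fa ∈ Finset.univ.filter (fun fa : Finset (K a).E =>
            ((Quot.mk (Multigraph.murel (K a) faᶜ) (ub a)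
              = Quot.mk (Multigraph.murel (K a) faᶜ) (vb a)) ↔ a ∈ S)),
          -((-1 : ℂ) ^ (fa.card + (K a).mu faᶜ) * t ^ ((K a).betti faᶜ)) :=
        Finset.sum_congr rfl (fun fa _ => by
          rw [if_pos ha,
            show fa.card + (K a).mu faᶜ + 1 = (fa.card + (K a).mu faᶜ) + 1 from rfl, pow_succ]
          ring)
      have h2 : β a = - Multigraph.WsumT (K a) (ub a) (vb a) t := by rw [hWT a]; ring
      rw [h1, Finset.sum_neg_distrib, if_pos ha, h2]
      congr 1
      unfold Multigraph.WsumT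
      exact Finset.sum_congr (by ext fa; simp [ha]) (fun _ _ => rfl)
    · have h1 : (∑ fa ∈ Finset.univ.filter (fun fa : Finset (K a).E =>
            ((Quot.mk (Multigraph.murel (K a) faᶜ) (ub a)
              = Quot.mk (Multigraph.murel (K a) faᶜ) (vb a)) ↔ a ∈ S)),
          (-1 : ℂ) ^ (fa.card + (K a).mu faᶜ + (if a ∈ S then 1 else 0))
            * t ^ ((K a).betti faᶜ))
          = ∑ fa ∈ Finset.univ.filter (fun fa : Finset (K a).E =>
            ((Quot.mk (Multigraph.murel (K a) faᶜ) (ub a)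
              = Quot.mk (Multigraph.murel (K a) faᶜ) (vb a)) ↔ a ∈ S)),
          ((-1 : ℂ) ^ (fa.card + (K a).mu faᶜ) * t ^ ((K a).betti faᶜ)) :=
        Finset.sum_congr rfl (fun fa _ => by rw [if_neg ha, add_zero])
      rw [h1, if_neg ha, ← hWF a]
      unfold Multigraph.WsumF
      exact Finset.sum_congr (by ext fa; simp [ha]) (fun _ _ => rfl)
  rw [hyam0, ← Equiv.sum_comp (Multigraph.edgesEquiv G K).symm
      (fun F : Finset ((a : G.E) × (K a).E) =>
        (-1 : ℂ) ^ (F.card + (G.replaceEdges K u v ub vb).mu Fᶜ)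
          * t ^ ((G.replaceEdges K u v ub vb).betti Fᶜ)),
    Finset.sum_congr rfl (fun g _ => key g),
    ← Finset.sum_fiberwise Finset.univ (fun g : (a : G.E) → Finset (K a).E =>
      Multigraph.SR G K ub vb (fun a => (g a)ᶜ)),
    Finset.sum_congr rfl (fun S _ => hfib S)]
  rw [Multigraph.chain_eq_sum G γ (-σ), Finset.mul_sum]
  refine Finset.sum_congr rfl (fun S _ => ?_)
  have hprodite : (∏ a : G.E, if a ∈ S then β a else α a)
      = (∏ a ∈ S, β a) * ∏ a ∈ Sᶜ, α a := by
    rw [Finset.prod_ite β α]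
    congr 1
    · congr 1
      ext a
      simp
    · congr 1
      ext a
      simp
  have hone : (1 : ℂ) - -σ = -t := by rw [htdef, hσ]; ring
  have hprodbeta : (∏ a : G.E, β a) = (∏ a ∈ S, β a) * ∏ a ∈ Sᶜ, β a :=
    (Finset.prod_mul_prod_compl S β).symm
  have hc1 : (∏ a ∈ Sᶜ, β a) * (∏ a ∈ Sᶜ, (γ a - 1))
      = (-1 : ℂ) ^ (Sᶜ.card) * ∏ a ∈ Sᶜ, α a := by
    rw [← Finset.prod_mul_distrib,
      Finset.prod_congr rfl (fun a _ => show β a * (γ a - 1) = -1 * α a from by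
        rw [hγ a, show (1 : ℂ) - α a / β a - 1 = -(α a / β a) from by ring, mul_neg,
          mul_comm (β a) (α a / β a), div_mul_cancel₀ (α a) (hβ0 a), neg_one_mul]),
      Finset.prod_mul_distrib, Finset.prod_const]
  have hza : (-1 : ℂ) ^ ((Nat.card G.V : ℤ) - (Fintype.card G.E : ℤ))
      = (-1 : ℂ) ^ (Nat.card G.V + Fintype.card G.E) := by
    rw [zpow_sub₀ (by norm_num : (-1 : ℂ) ≠ 0), zpow_natCast, zpow_natCast, pow_add,
      div_eq_mul_inv, ← inv_pow, inv_neg, inv_one]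
  have hpar : (-1 : ℂ) ^ (G.mu S)
      = (-1 : ℂ) ^ (Nat.card G.V + Fintype.card G.E) * (-1 : ℂ) ^ (G.betti S)
          * (-1 : ℂ) ^ (Sᶜ.card) := by
    rw [← pow_add, ← pow_add]
    apply Multigraph.negOnePow_congr
    have h1 := G.card_le_mu S
    have h2 : Sᶜ.card = Fintype.card G.E - S.card := Finset.card_compl S
    have h3 : S.card ≤ Fintype.card G.E := Finset.card_le_univ S
    have h4 : G.betti S = S.card + G.mu S - Nat.card G.V := rfl
    omega
  calc (-1 : ℂ) ^ (G.mu S) * t ^ (G.betti S) * ∏ a : G.E, (if a ∈ S then β a else α a)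
      = (-1 : ℂ) ^ (Nat.card G.V + Fintype.card G.E) * ((∏ a ∈ S, β a)
          * ((-1 : ℂ) ^ (G.betti S) * t ^ (G.betti S)
            * ((-1 : ℂ) ^ (Sᶜ.card) * ∏ a ∈ Sᶜ, α a))) := by
        rw [hprodite, hpar]
        ring
    _ = (-1 : ℂ) ^ ((Nat.card G.V : ℤ) - (Fintype.card G.E : ℤ)) * (∏ a : G.E, β a)
          * ((1 - -σ) ^ (G.betti S) * ∏ a ∈ Sᶜ, (γ a - 1)) := by
        rw [← hc1, hza, hone, neg_pow t (G.betti S), hprodbeta]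
        ring
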